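/- Let K = β̄ + u i* > 0, c > 0, l_i > 0, α > 0, p_r > 0, and suppose (u + β̄c)² > 4αuc. If i* = ((u − β̄c) + √((u+β̄c)² − 4αuc))/(2uc) (u ≠ 0), then c K² − uα > 0; equivalently the determinant of the Jacobian J(i*,r*) of the IBIN system at the interior equilibrium, which equals (i* l_i/K)(cK² − uα), is strictly positive. -/
import Mathlib


/-- For `K = β̄ + u i* > 0` at the interior equilibrium,
`cK² − uα > 0`; equivalently the determinant `(i* l_i/K)(cK² − uα)` of the
IBIN Jacobian is strictly positive. -/
theorem ibin_jacobian_det_pos (β α u c li pr K istar : ℝ)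
    (hc : 0 < c) (hli : 0 < li) (hα : 0 < α) (hpr : 0 < pr)
    (hu : u ≠ 0)
    (hdisc : 4 * α * u * c < (u + β * c) ^ 2)
    (histar : istar = ((u - β * c) + Real.sqrt ((u + β * c) ^ 2 - 4 * α * u * c))
        / (2 * u * c))
    (hipos : 0 < istar)
    (hK : K = β + u * istar) (hKpos : 0 < K) :
    0 < c * K ^ 2 - u * α ∧
    0 < (istar * li / K) * (c * K ^ 2 - u * α) := by
  set D := (u + β * c) ^ 2 - 4 * α * u * c with hDdef
  have hD : 0 < D := by simp [hDdef]; linarith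
  set s := Real.sqrt D with hsdef
  have hs : 0 < s := Real.sqrt_pos.mpr hD
  have hs2 : s ^ 2 = D := Real.sq_sqrt hD.le
  have hKeq : K = (u + β * c + s) / (2 * c) := by
    rw [hK, histar]
    field_simp
    ring
  have hsum : 0 < u + β * c + s := by
    have h2c : 0 < 2 * c := by linarith
    have := (div_pos_iff.mp (hKeq ▸ hKpos))
    rcases this with ⟨h1, _⟩ | ⟨_, h2⟩
    · exact h1
    · linarith
  have h1 : 0 < c * K ^ 2 - u * α := by
    rw [hKeq]
    have key : 0 < 2 * s * (u + β * c + s) := by positivity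
    rw [hDdef] at hs2
    have hc' : c ≠ 0 := ne_of_gt hc
    rw [div_pow]
    rw [show c * ((u + β * c + s) ^ 2 / (2 * c) ^ 2) - u * α
        = (2 * s * (u + β * c + s)) / (4 * c) by field_simp; nlinarith [hs2]]
    positivity
  exact ⟨h1, by positivity⟩
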